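/- Let q be a prime power and G ≤ PGL₂(F_q) a non-cyclic subgroup. If f ∈ F_q[x] is a monic irreducible polynomial of degree n ≥ 2 such that f is [A]-invariant for every [A] ∈ G, then n = 2, i.e., f is a quadratic polynomial. -/

import Mathlib

open Polynomial

noncomputable section

namespace PGLAct

variable {F : Type} [Field F]

/-- The composition `A ∘ f = ∑ aᵢ (a x + c)^i (b x + d)^{k-i}` for `A = [[a,b],[c,d]]`. -/
def mcirc (A : Matrix (Fin 2) (Fin 2) F) (f : F[X]) : F[X] :=
  ∑ i ∈ Finset.range (f.natDegree + 1),
    C (f.coeff i) * (C (A 0 0) * X + C (A 1 0)) ^ i *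
      (C (A 0 1) * X + C (A 1 1)) ^ (f.natDegree - i)

/-- The composition `[A] ∘ f`: the monic normalization of `A ∘ f`. -/
def pcirc (A : Matrix (Fin 2) (Fin 2) F) (f : F[X]) : F[X] :=
  C (mcirc A f).leadingCoeff⁻¹ * mcirc A f

/-- The subgroup of scalar matrices in `GL₂(F)`. -/
def scalarSub (F : Type) [Field F] : Subgroup (GL (Fin 2) F) :=
  (Units.map ((Matrix.scalar (Fin 2)).toMonoidHom : F →* Matrix (Fin 2) (Fin 2) F)).range

instance scalarSub_normal (F : Type) [Field F] : (scalarSub F).Normal := by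
  constructor
  intro n hn g
  obtain ⟨u, hu⟩ := hn
  refine ⟨u, ?_⟩
  ext : 1
  have hcomm : Commute ((Matrix.scalar (Fin 2)) (u : F)) (g : Matrix (Fin 2) (Fin 2) F) :=
    Matrix.scalar_commute _ (fun r' => Commute.all _ r') _
  have hval : (n : Matrix (Fin 2) (Fin 2) F) = (Matrix.scalar (Fin 2)) (u : F) := by
    rw [← hu]; rfl
  calc ((Units.map ((Matrix.scalar (Fin 2)).toMonoidHom : F →* Matrix (Fin 2) (Fin 2) F)) u :
        GL (Fin 2) F).val
      = (Matrix.scalar (Fin 2)) (u : F) := rfl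
    _ = (g : Matrix (Fin 2) (Fin 2) F) * (Matrix.scalar (Fin 2)) (u : F)
        * ((g⁻¹ : GL (Fin 2) F) : Matrix (Fin 2) (Fin 2) F) := by
        rw [← hcomm.eq, mul_assoc, ← Units.val_mul, mul_inv_cancel]
        simp
    _ = ((g * n * g⁻¹ : GL (Fin 2) F) : Matrix (Fin 2) (Fin 2) F) := by
        simp [Units.val_mul, hval]

/-- `PGL₂(F)`, the projective general linear group. -/
def PGL2 (F : Type) [Field F] : Type := GL (Fin 2) F ⧸ scalarSub F

instance : Group (PGL2 F) := inferInstanceAs (Group (GL (Fin 2) F ⧸ scalarSub F))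

/-- The natural projection `GL₂(F) → PGL₂(F)`, `A ↦ [A]`. -/
def toPGL (F : Type) [Field F] : GL (Fin 2) F →* PGL2 F := QuotientGroup.mk' (scalarSub F)

/-- The polynomial `F_{A,r} = b x^{q^r+1} - a x^{q^r} + d x - c`. -/
def FAr [Fintype F] (A : Matrix (Fin 2) (Fin 2) F) (r : ℕ) : F[X] :=
  C (A 0 1) * X ^ (Fintype.card F ^ r + 1) - C (A 0 0) * X ^ (Fintype.card F ^ r)
    + C (A 1 1) * X - C (A 1 0)


/-- The σ-product of `A = [[a,b],[c,d]]` and `A₀ = [[a₀,b₀],[c₀,d₀]]`. -/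
def sigmaProd (A A0 : Matrix (Fin 2) (Fin 2) F) : Matrix (Fin 2) (Fin 2) F :=
  !![-(A 0 1 * (A0 0 0 * A0 1 0) - A 0 0 * (A0 0 0 * A0 1 1) + A 1 1 * (A0 1 0 * A0 0 1)
        - A 1 0 * (A0 0 1 * A0 1 1)),
     A 0 1 * A0 0 0 ^ 2 - A 0 0 * (A0 0 0 * A0 0 1) + A 1 1 * (A0 0 0 * A0 0 1)
        - A 1 0 * A0 0 1 ^ 2;
     -(A 0 1 * A0 1 0 ^ 2 - A 0 0 * (A0 1 0 * A0 1 1) + A 1 1 * (A0 1 1 * A0 1 0)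
        - A 1 0 * A0 1 1 ^ 2),
     A 0 1 * (A0 0 0 * A0 1 0) - A 0 0 * (A0 1 0 * A0 0 1) + A 1 1 * (A0 1 1 * A0 0 0)
        - A 1 0 * (A0 0 1 * A0 1 1)]

variable {K : Type} [Field K] [Algebra F K]

/-- The Möbius action of a matrix on elements of a field extension. -/
def Mob (M : Matrix (Fin 2) (Fin 2) F) (x : K) : K :=
  (algebraMap F K (M 0 0) * x + algebraMap F K (M 1 0)) /
  (algebraMap F K (M 0 1) * x + algebraMap F K (M 1 1))

lemma no_root_of_irreducible {f : F[X]} (hirr : Irreducible f) (hdeg : 2 ≤ f.natDegree)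
    (r : F) : eval r f ≠ 0 := by
  intro h
  obtain ⟨g, hg⟩ := dvd_iff_isRoot.mpr h
  rcases hirr.isUnit_or_isUnit hg with hu | hu
  · exact Polynomial.not_isUnit_X_sub_C r hu
  · have h1 : g.natDegree = 0 := Polynomial.natDegree_eq_zero_of_isUnit hu
    have h2 : f.natDegree = 1 := by
      rw [hg, Polynomial.natDegree_mul (Polynomial.X_sub_C_ne_zero r) hu.ne_zero,
        Polynomial.natDegree_X_sub_C, h1]
    omega

lemma denom_ne_zero {f : F[X]} (hirr : Irreducible f) (hdeg : 2 ≤ f.natDegree)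
    (A : GL (Fin 2) F) {β : K} (hβ : aeval β f = 0) :
    algebraMap F K ((A : Matrix (Fin 2) (Fin 2) F) 0 1) * β
      + algebraMap F K ((A : Matrix (Fin 2) (Fin 2) F) 1 1) ≠ 0 := by
  set M : Matrix (Fin 2) (Fin 2) F := (A : Matrix (Fin 2) (Fin 2) F) with hM
  intro h
  by_cases hb : M 0 1 = 0
  · have hd : M 1 1 = 0 := by
      rw [hb] at h
      simpa using h
    have hdet : IsUnit M.det := (Matrix.isUnit_iff_isUnit_det M).mp A.isUnit
    rw [Matrix.det_fin_two, hb, hd] at hdet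
    simp at hdet
  · have hb' : algebraMap F K (M 0 1) ≠ 0 := by
      simpa using hb
    have hβ' : β = algebraMap F K (-(M 1 1) / M 0 1) := by
      rw [map_div₀, map_neg, eq_div_iff hb']
      rw [mul_comm] at h
      linear_combination h
    rw [hβ', aeval_algebraMap_apply_eq_algebraMap_eval] at hβ
    have h0 : eval (-(M 1 1) / M 0 1) f = 0 := by
      have : Function.Injective (algebraMap F K) := (algebraMap F K).injective
      exact this (by simpa using hβ)
    exact no_root_of_irreducible hirr hdeg _ h0

lemma aeval_mcirc (M : Matrix (Fin 2) (Fin 2) F) (f : F[X]) (β : K)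
    (hv : algebraMap F K (M 0 1) * β + algebraMap F K (M 1 1) ≠ 0) :
    aeval β (mcirc M f)
      = (algebraMap F K (M 0 1) * β + algebraMap F K (M 1 1)) ^ f.natDegree
          * aeval (Mob M β) f := by
  set u : K := algebraMap F K (M 0 0) * β + algebraMap F K (M 1 0) with hu
  set v : K := algebraMap F K (M 0 1) * β + algebraMap F K (M 1 1) with hvdef
  have h1 : aeval β (mcirc M f)
      = ∑ i ∈ Finset.range (f.natDegree + 1),
          algebraMap F K (f.coeff i) * u ^ i * v ^ (f.natDegree - i) := by
    rw [mcirc, map_sum]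
    refine Finset.sum_congr rfl fun i _ => ?_
    simp [hu, hvdef]
  rw [h1, Polynomial.aeval_eq_sum_range (Mob M β), Finset.mul_sum]
  refine Finset.sum_congr rfl fun i hi => ?_
  have hin : i ≤ f.natDegree := Nat.lt_succ_iff.mp (Finset.mem_range.mp hi)
  have hMob : Mob M β = u / v := rfl
  have hsplit : v ^ f.natDegree = v ^ (f.natDegree - i) * v ^ i := by
    rw [← pow_add]; congr 1; omega
  rw [Algebra.smul_def, hMob, div_pow, hsplit]
  have hvi : v ^ i ≠ 0 := pow_ne_zero _ hv
  field_simp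

lemma mob_root {f : F[X]} (hf : f.Monic) (hirr : Irreducible f) (hdeg : 2 ≤ f.natDegree)
    (A : GL (Fin 2) F) (hA : pcirc (A : Matrix (Fin 2) (Fin 2) F) f = f)
    {β : K} (hβ : aeval β f = 0) :
    aeval (Mob (A : Matrix (Fin 2) (Fin 2) F) β) f = 0 := by
  set M : Matrix (Fin 2) (Fin 2) F := (A : Matrix (Fin 2) (Fin 2) F)
  have hm0 : mcirc M f ≠ 0 := by
    intro h0
    rw [pcirc, h0, mul_zero] at hA
    exact hf.ne_zero hA.symm
  have hl : (mcirc M f).leadingCoeff ≠ 0 := Polynomial.leadingCoeff_ne_zero.mpr hm0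
  have hmf : mcirc M f = C (mcirc M f).leadingCoeff * f := by
    have h := congrArg (fun p => C (mcirc M f).leadingCoeff * p) hA
    simp only [pcirc] at h
    rw [← mul_assoc, ← C_mul, mul_inv_cancel₀ hl, C_1, one_mul] at h
    exact h
  have hv := denom_ne_zero hirr hdeg A hβ
  have := aeval_mcirc M f β hv
  rw [hmf] at this
  simp only [map_mul, aeval_C, hβ, mul_zero] at this
  rcases mul_eq_zero.mp this.symm with h | h
  · exact absurd h (pow_ne_zero _ hv)
  · exact h

lemma mob_scalar (M : Matrix (Fin 2) (Fin 2) F) {s : F} (hs : s ≠ 0) (x : K) :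
    Mob (M * Matrix.scalar (Fin 2) s) x = Mob M x := by
  have hs' : algebraMap F K s ≠ 0 := by simpa using hs
  simp only [Mob, Matrix.scalar_apply, Matrix.mul_diagonal, map_mul]
  rw [show algebraMap F K (M 0 0) * algebraMap F K s * x + algebraMap F K (M 1 0) * algebraMap F K s
      = (algebraMap F K (M 0 0) * x + algebraMap F K (M 1 0)) * algebraMap F K s by ring,
    show algebraMap F K (M 0 1) * algebraMap F K s * x + algebraMap F K (M 1 1) * algebraMap F K s
      = (algebraMap F K (M 0 1) * x + algebraMap F K (M 1 1)) * algebraMap F K s by ring,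
    mul_div_mul_right _ _ hs']

lemma mob_comp (A B : Matrix (Fin 2) (Fin 2) F) (x : K)
    (hv : algebraMap F K (A 0 1) * x + algebraMap F K (A 1 1) ≠ 0) :
    Mob B (Mob A x) = Mob (A * B) x := by
  set u : K := algebraMap F K (A 0 0) * x + algebraMap F K (A 1 0) with hu
  set v : K := algebraMap F K (A 0 1) * x + algebraMap F K (A 1 1) with hvd
  have h1 : algebraMap F K (B 0 0) * (u / v) + algebraMap F K (B 1 0)
      = (algebraMap F K (B 0 0) * u + algebraMap F K (B 1 0) * v) / v := by
    field_simp
  have h2 : algebraMap F K (B 0 1) * (u / v) + algebraMap F K (B 1 1)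
      = (algebraMap F K (B 0 1) * u + algebraMap F K (B 1 1) * v) / v := by
    field_simp
  have hMA : Mob A x = u / v := rfl
  rw [show Mob B (Mob A x) = (algebraMap F K (B 0 0) * (Mob A x) + algebraMap F K (B 1 0)) /
      (algebraMap F K (B 0 1) * (Mob A x) + algebraMap F K (B 1 1)) from rfl,
    hMA, h1, h2, div_div_div_cancel_right₀ hv, Mob]
  congr 1 <;>
    · simp only [hu, hvd, Matrix.mul_apply, Fin.sum_univ_two, map_add, map_mul]
      ring


/-- Scalar relation for matrices with the same image in `PGL₂`. -/
lemma eq_scalar_of_toPGL_eq {x y : GL (Fin 2) F} (h : toPGL F x = toPGL F y) :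
    ∃ u : Fˣ, (y : Matrix (Fin 2) (Fin 2) F)
      = (x : Matrix (Fin 2) (Fin 2) F) * Matrix.scalar (Fin 2) (u : F) := by
  have h2 : ∃ z ∈ scalarSub F, x * z = y := (QuotientGroup.mk'_eq_mk' (scalarSub F)).mp h
  obtain ⟨z, hz, hxz⟩ := h2
  obtain ⟨u, hu⟩ := hz
  refine ⟨u, ?_⟩
  rw [← hxz, Units.val_mul, ← hu]
  rfl

end PGLAct

/-- The Galois group of an extension of finite fields is cyclic. -/
lemma isCyclic_algEquiv_finiteField (F K : Type*) [Field F] [Fintype F] [Field K] [Fintype K]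
    [Algebra F K] : IsCyclic (K ≃ₐ[F] K) := by

  have hq : 1 < Fintype.card F := Fintype.one_lt_card
  set q := Fintype.card F with hqdef
  obtain ⟨p, hp⟩ := CharP.exists F
  haveI : CharP K p := charP_of_injective_algebraMap' F p
  obtain ⟨m, hpp, hqm⟩ := FiniteField.card F p
  haveI : Fact p.Prime := ⟨hpp⟩
  -- the Frobenius `x ↦ x ^ q` as an `F`-algebra hom
  let φ : K →ₐ[F] K :=
    { toFun := fun x => x ^ q
      map_one' := one_pow q
      map_mul' := fun x y => mul_pow x y q
      map_zero' := zero_pow (by omega)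
      map_add' := fun x y => by
        show (x + y) ^ q = x ^ q + y ^ q
        rw [hqdef, hqm]; exact add_pow_char_pow x y _ _
      commutes' := fun x => by
        show (algebraMap F K x) ^ q = algebraMap F K x
        rw [← map_pow, FiniteField.pow_card] }
  have hφ : ∀ x : K, φ x = x ^ q := fun _ => rfl
  have hinj : Function.Injective φ := φ.toRingHom.injective
  let σ : K ≃ₐ[F] K := AlgEquiv.ofBijective φ ((Finite.injective_iff_bijective).mp hinj)
  have hσ : ∀ x : K, σ x = x ^ q := fun _ => rfl
  have hpow : ∀ (j : ℕ) (x : K), (σ ^ j) x = x ^ q ^ j := by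
    intro j
    induction j with
    | zero => intro x; simp
    | succ j ih =>
      intro x
      rw [pow_succ', AlgEquiv.mul_apply, ih, hσ, ← pow_mul, ← pow_succ]
  haveI : FiniteDimensional F K := Module.Finite.of_finite
  set n := Module.finrank F K with hn
  have hcard : Fintype.card (K ≃ₐ[F] K) = n := by
    rw [← Nat.card_eq_fintype_card]; exact IsGalois.card_aut_eq_finrank F K
  refine isCyclic_of_orderOf_eq_card σ ?_
  rw [Nat.card_eq_fintype_card, hcard]
  have hdvd : orderOf σ ∣ n := by
    have := orderOf_dvd_card (x := σ); rwa [hcard] at this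
  have hkpos : 0 < orderOf σ := orderOf_pos σ
  set k := orderOf σ with hk
  have hle : n ≤ k := by
    -- every element of K is a root of `X ^ q ^ k - X`
    have hroot : ∀ x : K, x ^ q ^ k = x := by
      intro x
      have := hpow k x
      rw [pow_orderOf_eq_one σ] at this
      simpa using this.symm
    set P : K[X] := X ^ q ^ k - X with hP
    have hqk : 1 < q ^ k := Nat.one_lt_pow (by omega) hq
    have hPdeg : P.natDegree = q ^ k := by
      rw [hP]
      compute_degree!
      · rw [if_neg (by omega)]; norm_num
      · omega
    have hP0 : P ≠ 0 := fun h => by simp [h] at hPdeg; omega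
    have hsub : (Finset.univ.val : Multiset K) ≤ P.roots := by
      rw [Multiset.le_iff_subset Finset.univ.nodup]
      intro x _
      rw [Polynomial.mem_roots hP0]
      simp [hP, Polynomial.IsRoot, hroot x]
    have h1 : Fintype.card K ≤ P.natDegree := by
      calc Fintype.card K = Multiset.card (Finset.univ.val : Multiset K) := rfl
        _ ≤ Multiset.card P.roots := Multiset.card_le_card hsub
        _ ≤ P.natDegree := P.card_roots' 
    rw [hPdeg, Module.card_eq_pow_finrank (K := F) (V := K)] at h1
    exact (Nat.pow_le_pow_iff_right hq).mp h1
  exact le_antisymm (Nat.le_of_dvd Module.finrank_pos hdvd) hle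

namespace PGLAct

end PGLAct


/-- If `G ≤ PGL₂(F_q)` is non-cyclic and `f` is a monic irreducible of degree
`n ≥ 2` fixed by every element of `G`, then `n = 2`. -/
theorem noncyclic_invariant_is_quadratic {F : Type} [Field F] [Fintype F]
    (G : Subgroup (PGLAct.PGL2 F)) (hnc : ¬ IsCyclic G)
    (f : F[X]) (n : ℕ) (hf : f.Monic) (hirr : Irreducible f)
    (hdeg : f.natDegree = n) (hn : 2 ≤ n)
    (hinv : ∀ A : GL (Fin 2) F, PGLAct.toPGL F A ∈ G → PGLAct.pcirc A.val f = f) :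
    n = 2 := by
  open PGLAct in
  by_contra hne
  apply hnc
  have hdeg2 : 2 ≤ f.natDegree := hdeg ▸ hn
  have hdeg3 : 3 ≤ f.natDegree := by omega
  haveI : Fact (Irreducible f) := ⟨hirr⟩
  set K := AdjoinRoot f with hKdef
  haveI : FiniteDimensional F K :=
    Module.Finite.of_basis (AdjoinRoot.powerBasis hf.ne_zero).basis
  haveI : Finite K := Module.finite_of_finite F
  haveI : Fintype K := Fintype.ofFinite K
  set α : K := AdjoinRoot.root f with hαdef
  have hroot : aeval α f = 0 := by
    rw [aeval_def, AdjoinRoot.algebraMap_eq]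
    exact AdjoinRoot.eval₂_root f
  have hmin : minpoly F α = f := (minpoly.eq_of_irreducible_of_monic hirr hroot hf).symm
  -- choose representatives in `GL₂`
  have hrep : ∀ x : PGL2 F, ∃ A : GL (Fin 2) F, toPGL F A = x := fun x =>
    QuotientGroup.mk'_surjective (scalarSub F) x
  choose rep hrepeq using hrep
  have hrinv : ∀ g : G, pcirc ((rep g.val) : Matrix (Fin 2) (Fin 2) F) f = f := fun g =>
    hinv (rep g.val) (by rw [hrepeq]; exact g.2)
  have hrootg : ∀ g : G, aeval (Mob ((rep g.val) : Matrix (Fin 2) (Fin 2) F) α) f = 0 :=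
    fun g => mob_root hf hirr hdeg2 _ (hrinv g) hroot
  -- the algebra endomorphisms
  let ψ : G → (K →ₐ[F] K) := fun g => AdjoinRoot.liftAlgHom f (Algebra.ofId F K) _ (hrootg g)
  have hψα : ∀ g : G, ψ g α = Mob ((rep g.val) : Matrix (Fin 2) (Fin 2) F) α := fun g =>
    AdjoinRoot.liftAlgHom_root _ _ _ (hrootg g)
  have hbij : ∀ g : G, Function.Bijective (ψ g) := fun g =>
    ⟨(ψ g).toRingHom.injective,
      LinearMap.surjective_of_injective (f := (ψ g).toLinearMap) (ψ g).toRingHom.injective⟩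
  let σ : G → (K ≃ₐ[F] K) := fun g => AlgEquiv.ofBijective (ψ g) (hbij g)
  have hσα : ∀ g : G, σ g α = Mob ((rep g.val) : Matrix (Fin 2) (Fin 2) F) α := fun g => hψα g
  have hcomm : ∀ (M : Matrix (Fin 2) (Fin 2) F) (χ : K →ₐ[F] K) (x : K),
      χ (Mob M x) = Mob M (χ x) := by
    intro M χ x
    simp only [Mob, map_div₀, map_add, map_mul, AlgHom.commutes]
  -- homomorphism property
  have hmul : ∀ g h : G, σ (g * h) = σ g * σ h := by
    intro g h
    have h1 : toPGL F (rep (g * h).val) = toPGL F (rep g.val * rep h.val) := by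
      rw [hrepeq, map_mul, hrepeq, hrepeq]
      rfl
    obtain ⟨u, hu⟩ := eq_scalar_of_toPGL_eq h1.symm
    have hval : (σ (g * h)) α = (σ g * σ h) α := by
      rw [AlgEquiv.mul_apply, hσα, hu]
      rw [show ((rep g.val * rep h.val : GL (Fin 2) F) : Matrix (Fin 2) (Fin 2) F)
          = ((rep g.val : Matrix (Fin 2) (Fin 2) F) * (rep h.val : Matrix (Fin 2) (Fin 2) F))
          from rfl]
      rw [mob_scalar _ u.ne_zero α]
      have h2 : σ g (σ h α) = Mob ((rep h.val) : Matrix (Fin 2) (Fin 2) F) (σ g α) := by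
        rw [hσα h]
        exact hcomm _ (ψ g) α
      rw [h2, hσα g, mob_comp _ _ α (denom_ne_zero hirr hdeg2 (rep g.val) hroot)]
    have hhom : ((σ (g * h)) : K →ₐ[F] K) = ((σ g * σ h : K ≃ₐ[F] K) : K →ₐ[F] K) :=
      AdjoinRoot.algHom_ext hval
    exact AlgEquiv.ext fun x => DFunLike.congr_fun hhom x
  let Φ : G →* (K ≃ₐ[F] K) := MonoidHom.mk' σ hmul
  -- injectivity
  have hinj : Function.Injective Φ := by
    refine (injective_iff_map_eq_one Φ).mpr ?_
    intro g hg
    have hfix : Mob ((rep g.val) : Matrix (Fin 2) (Fin 2) F) α = α := by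
      have h1 : σ g α = α := by rw [show σ g = Φ g from rfl, hg]; rfl
      rw [← hσα g]; exact h1
    set M : Matrix (Fin 2) (Fin 2) F := ((rep g.val) : Matrix (Fin 2) (Fin 2) F) with hM
    have hv := denom_ne_zero hirr hdeg2 (rep g.val) hroot (β := α)
    have he : algebraMap F K (M 0 0) * α + algebraMap F K (M 1 0)
        = α * (algebraMap F K (M 0 1) * α + algebraMap F K (M 1 1)) := by
      rw [Mob, div_eq_iff hv] at hfix
      exact hfix
    set p : F[X] := C (M 0 1) * X ^ 2 + C (M 1 1 - M 0 0) * X - C (M 1 0) with hp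
    have hap : aeval α p = 0 := by
      simp only [hp, map_add, map_sub, map_mul, map_pow, aeval_C, aeval_X]
      linear_combination -he
    have hpz : p = 0 := by
      by_contra hp0
      have hdvd : f ∣ p := hmin ▸ minpoly.dvd F α hap
      have h2 := Polynomial.natDegree_le_of_dvd hdvd hp0
      have hple : p.natDegree ≤ 2 := by
        rw [hp]
        compute_degree
      omega
    have hb : M 0 1 = 0 := by
      have := congrArg (fun q : F[X] => q.coeff 2) hpz
      simpa [hp] using this
    have hc : M 1 0 = 0 := by
      have := congrArg (fun q : F[X] => q.coeff 0) hpz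
      simpa [hp] using this
    have had : M 1 1 = M 0 0 := by
      have := congrArg (fun q : F[X] => q.coeff 1) hpz
      simp [hp] at this
      exact sub_eq_zero.mp this
    have hdet : IsUnit M.det := (Matrix.isUnit_iff_isUnit_det M).mp (rep g.val).isUnit
    rw [Matrix.det_fin_two, hb, hc, had] at hdet
    have ha : M 0 0 ≠ 0 := by
      intro h0
      rw [h0] at hdet
      simp at hdet
    have hmem : rep g.val ∈ scalarSub F := by
      refine ⟨Units.mk0 (M 0 0) ha, Units.ext ?_⟩
      show Matrix.scalar (Fin 2) (M 0 0) = M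
      rw [Matrix.scalar_apply]
      ext i j
      fin_cases i <;> fin_cases j <;>
        simp [Matrix.diagonal, hb, hc, had]
    have hg1 : (g : PGL2 F) = 1 := by
      rw [← hrepeq (g : PGL2 F)]
      exact (QuotientGroup.eq_one_iff _).mpr hmem
    exact Subtype.ext hg1
  haveI := isCyclic_algEquiv_finiteField F K
  have e : G ≃* Φ.range := MonoidHom.ofInjective hinj
  exact isCyclic_of_surjective e.symm e.symm.surjective
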